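/- Let X be a nonempty set, (S,·,0) a commutative semigroup with zero, and f : X → S a function such that the graph Γ_{(S,f)}(X) has at least three vertices and such that for all x, y ∈ X, if f(x)·f(y) ≠ 0 then there exists z ∈ X with f(z) = f(x)·f(y). If Γ_{(S,f)}(X) contains a cycle, then every vertex of the core of Γ_{(S,f)}(X) (every vertex lying on some cycle of Γ_{(S,f)}(X)) lies on a cycle of length 3 or length 4; hence the core of Γ_{(S,f)}(X) is a union of triangles and rectangles. -/

import Mathlib

open SimpleGraph Walk

/-- `x` is a vertex of the graph `Γ_{(S,f)}(X)`: `f x ≠ 0` and there is some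
`y ≠ x` with `f y ≠ 0` and `f x * f y = 0`. -/
def IsVertexOf {X S : Type*} [Mul S] [Zero S] (f : X → S) (x : X) : Prop :=
  f x ≠ 0 ∧ ∃ y : X, y ≠ x ∧ f y ≠ 0 ∧ f x * f y = 0

lemma triangle_isCycle' {X : Type*} {G : SimpleGraph X} {a b c : X}
    (hab : G.Adj a b) (hbc : G.Adj b c) (hca : G.Adj c a) (hac : a ≠ c) :
    (Walk.cons hab (Walk.cons hbc (Walk.cons hca Walk.nil))).IsCycle := by
  have h1 := hab.ne
  have h2 := hbc.ne
  simp_all [Walk.isCycle_def, Walk.isTrail_def, Sym2.eq, Sym2.rel_iff', ne_comm]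

lemma square_isCycle' {X : Type*} {G : SimpleGraph X} {a b c d : X}
    (hab : G.Adj a b) (hbc : G.Adj b c) (hcd : G.Adj c d) (hda : G.Adj d a)
    (hac : a ≠ c) (hbd : b ≠ d) :
    (Walk.cons hab (Walk.cons hbc (Walk.cons hcd (Walk.cons hda Walk.nil)))).IsCycle := by
  have h1 := hab.ne
  have h2 := hbc.ne
  have h3 := hcd.ne
  have h4 := hda.ne
  simp_all [Walk.isCycle_def, Walk.isTrail_def, Sym2.eq, Sym2.rel_iff', ne_comm]

lemma getVert_eq_support_getElem' {X : Type*} {G : SimpleGraph X} {u v : X}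
    (p : G.Walk u v) {i : ℕ} (hi : i ≤ p.length) :
    p.getVert i = p.support[i]'(by simp [SimpleGraph.Walk.length_support]; omega) := by
  induction p generalizing i with
  | nil =>
    have : i = 0 := by simpa using hi
    subst this; simp
  | cons h q ih =>
    cases i with
    | zero => simp
    | succ n =>
      simp only [Walk.getVert_cons_succ, Walk.support_cons, List.getElem_cons_succ]
      exact ih (by simpa using hi)

lemma cycle_getVert_ne' {X : Type*} {G : SimpleGraph X} {a : X} {p : G.Walk a a}
    (hnd : p.support.tail.Nodup) {i j : ℕ} (h1 : 1 ≤ i) (hij : i < j)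
    (hj : j ≤ p.length) : p.getVert i ≠ p.getVert j := by
  have hlen : p.support.length = p.length + 1 := p.length_support
  have htl : p.support.tail.length = p.length := by
    rw [List.length_tail, hlen]; omega
  rw [getVert_eq_support_getElem' p (by omega), getVert_eq_support_getElem' p hj]
  have e1 : p.support[i]'(by omega) = p.support.tail[i-1]'(by omega) := by
    rw [List.getElem_tail]; congr 1; omega
  have e2 : p.support[j]'(by omega) = p.support.tail[j-1]'(by omega) := by
    rw [List.getElem_tail]; congr 1; omega
  rw [e1, e2]
  intro h
  have := (List.Nodup.getElem_inj_iff hnd).mp h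
  omega

/-- Theorem: let `S` be a commutative semigroup with zero and `f : X → S` be
such that whenever `f x * f y ≠ 0` there is `z` with `f z = f x * f y`, and
suppose `Γ_{(S,f)}(X)` has at least three vertices.  If `Γ_{(S,f)}(X)`
contains a cycle, then every vertex lying on some cycle of `Γ_{(S,f)}(X)`
(i.e. every vertex of the core) lies on a cycle of length `3` or `4`; hence
the core of `Γ_{(S,f)}(X)` is a union of triangles and rectangles. -/
theorem core_is_union_of_triangles_and_rectangles
    {X S : Type*} [Nonempty X] [SemigroupWithZero S]
    (hcomm : ∀ a b : S, a * b = b * a)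
    (f : X → S)
    (hf : ∀ x y : X, f x * f y ≠ 0 → ∃ z : X, f z = f x * f y)
    (G : SimpleGraph X)
    (hG : ∀ x y : X, G.Adj x y ↔ x ≠ y ∧ f x ≠ 0 ∧ f y ≠ 0 ∧ f x * f y = 0)
    (hthree : ∃ a b c : X, a ≠ b ∧ a ≠ c ∧ b ≠ c ∧
      IsVertexOf f a ∧ IsVertexOf f b ∧ IsVertexOf f c)
    (hcycle : ∃ (u : X) (p : G.Walk u u), p.IsCycle) :
    ∀ a : X, (∃ (u : X) (p : G.Walk u u), p.IsCycle ∧ a ∈ p.support) →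
      ∃ (u : X) (p : G.Walk u u), p.IsCycle ∧ (p.length = 3 ∨ p.length = 4) ∧
        a ∈ p.support := by
  classical
  rintro a ⟨u, p0, hp0, ha⟩
  -- rotate the cycle so that it starts at `a`
  set p : G.Walk a a := p0.rotate a ha with hpdef
  have hp : p.IsCycle := hp0.rotate ha
  have hn3 : 3 ≤ p.length := hp.three_le_length
  by_cases h34 : p.length = 3 ∨ p.length = 4
  · exact ⟨a, p, hp, h34, p.start_mem_support⟩
  have hn5 : 5 ≤ p.length := by omega
  set n := p.length with hndef
  set v : ℕ → X := p.getVert with hvdef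
  have hv0 : v 0 = a := p.getVert_zero
  have hvn : v n = a := p.getVert_length
  set b := v 1 with hb
  set c := v 2 with hc
  set d := v (n-2) with hd
  set e := v (n-1) with he
  -- adjacency along the cycle
  have hab : G.Adj a b := by
    have h := p.adj_getVert_succ (show 0 < n by omega)
    rw [show p.getVert 0 = a from hv0] at h
    exact h
  have hbc : G.Adj b c := p.adj_getVert_succ (show 1 < n by omega)
  have hde : G.Adj d e := by
    have h := p.adj_getVert_succ (show n-2 < n by omega)
    rw [show n-2+1 = n-1 by omega] at h
    exact h
  have hea : G.Adj e a := by
    have h := p.adj_getVert_succ (show n-1 < n by omega)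
    rw [show n-1+1 = n by omega, show p.getVert n = a from hvn] at h
    exact h
  -- distinctness of the relevant vertices
  have hne : ∀ i j : ℕ, 1 ≤ i → i < j → j ≤ n → v i ≠ v j :=
    fun i j h1 h2 h3 => cycle_getVert_ne' hp.support_nodup h1 h2 h3
  have hBC : b ≠ c := hne 1 2 (by omega) (by omega) (by omega)
  have hBD : b ≠ d := hne 1 (n-2) (by omega) (by omega) (by omega)
  have hBE : b ≠ e := hne 1 (n-1) (by omega) (by omega) (by omega)
  have hCE : c ≠ e := hne 2 (n-1) (by omega) (by omega) (by omega)
  have hDE : d ≠ e := hne (n-2) (n-1) (by omega) (by omega) (by omega)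
  have hAB : a ≠ b := by
    have := hne 1 n (by omega) (by omega) (by omega)
    rw [hvn] at this; exact this.symm
  have hAC : a ≠ c := by
    have := hne 2 n (by omega) (by omega) (by omega)
    rw [hvn] at this; exact this.symm
  have hAD : a ≠ d := by
    have := hne (n-2) n (by omega) (by omega) (by omega)
    rw [hvn] at this; exact this.symm
  have hAE : a ≠ e := by
    have := hne (n-1) n (by omega) (by omega) (by omega)
    rw [hvn] at this; exact this.symm
  -- semigroup data from the adjacencies
  obtain ⟨-, hfa, hfb, hab0⟩ := (hG a b).mp hab
  obtain ⟨-, -, hfc, hbc0⟩ := (hG b c).mp hbc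
  obtain ⟨-, hfd, hfe, hde0⟩ := (hG d e).mp hde
  obtain ⟨-, -, -, hea0⟩ := (hG e a).mp hea
  have adj : ∀ x y : X, x ≠ y → f x ≠ 0 → f y ≠ 0 → f x * f y = 0 → G.Adj x y :=
    fun x y h1 h2 h3 h4 => (hG x y).mpr ⟨h1, h2, h3, h4⟩
  -- helpers producing the final answer from a triangle or square based at `a`
  have tri : ∀ {x y : X} (h1 : G.Adj a x) (h2 : G.Adj x y) (h3 : G.Adj y a),
      a ≠ y → ∃ (u : X) (q : G.Walk u u), q.IsCycle ∧
        (q.length = 3 ∨ q.length = 4) ∧ a ∈ q.support := by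
    intro x y h1 h2 h3 hay
    exact ⟨a, Walk.cons h1 (Walk.cons h2 (Walk.cons h3 Walk.nil)),
      triangle_isCycle' h1 h2 h3 hay, Or.inl (by simp), Walk.start_mem_support _⟩
  have sq : ∀ {x y z : X} (h1 : G.Adj a x) (h2 : G.Adj x y) (h3 : G.Adj y z)
      (h4 : G.Adj z a), a ≠ y → x ≠ z → ∃ (u : X) (q : G.Walk u u), q.IsCycle ∧
        (q.length = 3 ∨ q.length = 4) ∧ a ∈ q.support := by
    intro x y z h1 h2 h3 h4 hay hxz
    exact ⟨a, Walk.cons h1 (Walk.cons h2 (Walk.cons h3 (Walk.cons h4 Walk.nil))),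
      square_isCycle' h1 h2 h3 h4 hay hxz, Or.inr (by simp), Walk.start_mem_support _⟩
  -- main case analysis
  by_cases hbe0 : f b * f e = 0
  · exact tri hab (adj b e hBE hfb hfe hbe0) hea hAE
  obtain ⟨z, hz⟩ := hf b e hbe0
  have hfz : f z ≠ 0 := fun h => hbe0 (hz.symm.trans h)
  have haz0 : f a * f z = 0 := by
    rw [hz, ← mul_assoc, hab0, zero_mul]
  have hzc0 : f z * f c = 0 := by
    rw [hz, hcomm (f b) (f e), mul_assoc, hbc0, mul_zero]
  have hzd0 : f z * f d = 0 := by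
    rw [hz, mul_assoc, hcomm (f e) (f d), hde0, mul_zero]
  by_cases hac0 : f a * f c = 0
  · exact tri hab hbc (adj c a hAC.symm hfc hfa (by rw [hcomm, hac0])) hAC
  by_cases had0 : f a * f d = 0
  · exact tri (adj a d hAD hfa hfd had0) hde hea hAE
  have hza : z ≠ a := fun h => hac0 (h ▸ hzc0)
  have hzc : z ≠ c := fun h => hac0 (h ▸ haz0)
  have hzd : z ≠ d := fun h => had0 (h ▸ haz0)
  by_cases hzb : z = b
  · -- square a b d e
    have hbd0 : f b * f d = 0 := hzb ▸ hzd0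
    exact sq hab (adj b d hBD hfb hfd hbd0) hde hea hAD hBE
  by_cases hze : z = e
  · -- square a b c e
    have hce0 : f c * f e = 0 := by rw [hcomm]; exact hze ▸ hzc0
    exact sq hab hbc (adj c e hCE hfc hfe hce0) hea hAC hBE
  · -- square a b c z
    have hcz0 : f c * f z = 0 := by rw [hcomm]; exact hzc0
    have hza0 : f z * f a = 0 := by rw [hcomm]; exact haz0
    exact sq hab hbc (adj c z (fun h => hzc h.symm) hfc hfz hcz0)
      (adj z a hza hfz hfa hza0) hAC (fun h => hzb h.symm)
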